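/- Let T : dom(T) ⊆ H₁ → H₂ be a closed densely defined operator between Hilbert spaces, where dom(T) is equipped with the graph norm. If every sequence (uₙ) in dom(T) that is bounded in graph norm and satisfies Tuₙ → v in H₂ has a subsequence converging in H₁, then T has finite-dimensional kernel and closed range. -/

import Mathlib

open Filter Topology

/-- Let `T` be a closed densely defined operator between Hilbert spaces,
modelled as a continuous linear map `T : D →L[ℂ] H₂` on its domain `D`, a Hilbert space
carrying the graph norm (`‖u‖² = ‖ι u‖² + ‖T u‖²` where `ι : D →L[ℂ] H₁` is the injective,
densely-ranged inclusion of the domain into `H₁`).  If every sequence in `D` bounded in the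
graph norm with `T uₙ → v` in `H₂` has a subsequence whose image under `ι` converges in `H₁`,
then `T` has finite-dimensional kernel and closed range. -/
theorem stmt_1 {H₁ H₂ D : Type*}
    [NormedAddCommGroup H₁] [InnerProductSpace ℂ H₁] [CompleteSpace H₁]
    [NormedAddCommGroup H₂] [InnerProductSpace ℂ H₂] [CompleteSpace H₂]
    [NormedAddCommGroup D] [InnerProductSpace ℂ D] [CompleteSpace D]
    (ι : D →L[ℂ] H₁) (hinj : Function.Injective ι) (hdense : DenseRange ι)
    (T : D →L[ℂ] H₂)
    (hgraph : ∀ u : D, ‖u‖ ^ 2 = ‖ι u‖ ^ 2 + ‖T u‖ ^ 2)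
    (hsubseq : ∀ (u : ℕ → D) (C : ℝ), (∀ n, ‖u n‖ ≤ C) →
      ∀ v : H₂, Tendsto (fun n => T (u n)) atTop (𝓝 v) →
      ∃ φ : ℕ → ℕ, StrictMono φ ∧ ∃ w : H₁,
        Tendsto (fun n => ι (u (φ n))) atTop (𝓝 w)) :
    FiniteDimensional ℂ (LinearMap.ker (T : D →ₗ[ℂ] H₂)) ∧ IsClosed (LinearMap.range (T : D →ₗ[ℂ] H₂) : Set H₂) := by
  -- graph norm estimate
  have hbound : ∀ a : D, ‖a‖ ≤ ‖ι a‖ + ‖T a‖ := by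
    intro a
    nlinarith [hgraph a, norm_nonneg a, norm_nonneg (ι a), norm_nonneg (T a)]
  -- key: bounded sequences with convergent images under T have subsequences convergent in D
  have key : ∀ (u : ℕ → D) (C : ℝ), (∀ n, ‖u n‖ ≤ C) →
      ∀ v : H₂, Tendsto (fun n => T (u n)) atTop (𝓝 v) →
      ∃ φ : ℕ → ℕ, StrictMono φ ∧ ∃ w : D,
        Tendsto (fun n => u (φ n)) atTop (𝓝 w) := by
    intro u C hC v hv
    obtain ⟨φ, hφ, w, hw⟩ := hsubseq u C hC v hv
    have h1 : CauchySeq fun n => ι (u (φ n)) := hw.cauchySeq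
    have h2 : CauchySeq fun n => T (u (φ n)) := by
      have : Tendsto (fun n => T (u (φ n))) atTop (𝓝 v) := hv.comp hφ.tendsto_atTop
      exact this.cauchySeq
    have hcs : CauchySeq fun n => u (φ n) := by
      rw [Metric.cauchySeq_iff] at h1 h2 ⊢
      intro ε hε
      obtain ⟨N1, hN1⟩ := h1 (ε / 2) (by linarith)
      obtain ⟨N2, hN2⟩ := h2 (ε / 2) (by linarith)
      refine ⟨max N1 N2, fun m hm n hn => ?_⟩
      have e1 := hN1 m (le_trans (le_max_left _ _) hm) n (le_trans (le_max_left _ _) hn)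
      have e2 := hN2 m (le_trans (le_max_right _ _) hm) n (le_trans (le_max_right _ _) hn)
      rw [dist_eq_norm] at e1 e2 ⊢
      have := hbound (u (φ m) - u (φ n))
      rw [map_sub, map_sub] at this
      linarith
    obtain ⟨w', hw'⟩ := cauchySeq_tendsto_of_complete hcs
    exact ⟨φ, hφ, w', hw'⟩
  have hkerclosed : IsClosed (LinearMap.ker (T : D →ₗ[ℂ] H₂) : Set D) := ContinuousLinearMap.isClosed_ker T
  constructor
  · -- finite dimensional kernel
    apply FiniteDimensional.of_isCompact_closedBall₀ ℂ (r := 1) one_pos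
    apply IsSeqCompact.isCompact
    intro u hu
    have hC : ∀ n, ‖(u n : D)‖ ≤ 1 := by
      intro n
      have := hu n
      rw [Metric.mem_closedBall, dist_zero_right] at this
      exact this
    have hv : Tendsto (fun n => T (u n : D)) atTop (𝓝 0) := by
      have : (fun n => T (u n : D)) = fun _ => (0 : H₂) := by
        funext n
        exact (u n).2
      rw [this]
      exact tendsto_const_nhds
    obtain ⟨φ, hφ, w, hw⟩ := key (fun n => (u n : D)) 1 hC 0 hv
    have hwmem : w ∈ LinearMap.ker (T : D →ₗ[ℂ] H₂) :=
      hkerclosed.mem_of_tendsto hw (Eventually.of_forall fun n => (u (φ n)).2)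
    have hwball : (⟨w, hwmem⟩ : LinearMap.ker (T : D →ₗ[ℂ] H₂)) ∈ Metric.closedBall (0 : LinearMap.ker (T : D →ₗ[ℂ] H₂)) 1 := by
      rw [Metric.mem_closedBall, dist_zero_right]
      have hnw : Tendsto (fun n => ‖(u (φ n) : D)‖) atTop (𝓝 ‖w‖) := hw.norm
      exact le_of_tendsto hnw (Eventually.of_forall fun n => hC (φ n))
    refine ⟨⟨w, hwmem⟩, hwball, φ, hφ, ?_⟩
    rw [tendsto_subtype_rng]
    exact hw
  · -- closed range
    haveI : CompleteSpace (LinearMap.ker (T : D →ₗ[ℂ] H₂)) := hkerclosed.completeSpace_coe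
    -- coercivity on the orthogonal complement of the kernel
    have hc : ∃ c : ℝ, ∀ a : D, a ∈ (LinearMap.ker (T : D →ₗ[ℂ] H₂))ᗮ → ‖a‖ ≤ c * ‖T a‖ := by
      by_contra h
      push_neg at h
      have hsel : ∀ n : ℕ, ∃ a : D, a ∈ (LinearMap.ker (T : D →ₗ[ℂ] H₂))ᗮ ∧ (n + 1 : ℝ) * ‖T a‖ < ‖a‖ := by
        intro n
        obtain ⟨a, ha, hlt⟩ := h (n + 1 : ℝ)
        exact ⟨a, ha, hlt⟩
      choose a hamem halt using hsel
      have hapos : ∀ n, a n ≠ 0 := by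
        intro n hn
        have := halt n
        rw [hn] at this
        simp at this
      set u : ℕ → D := fun n => ‖a n‖⁻¹ • a n with hudef
      have hnorm : ∀ n, ‖u n‖ = 1 := by
        intro n
        simp only [hudef, norm_smul, norm_inv, norm_norm]
        rw [inv_mul_cancel₀ (norm_ne_zero_iff.2 (hapos n))]
      have humem : ∀ n, u n ∈ (LinearMap.ker (T : D →ₗ[ℂ] H₂))ᗮ := fun n =>
        Submodule.smul_of_tower_mem _ _ (hamem n)
      have hTu : ∀ n, ‖T (u n)‖ ≤ 1 / (n + 1 : ℝ) := by
        intro n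
        have h1 : (0:ℝ) < ‖a n‖ := norm_pos_iff.2 (hapos n)
        have h2 : (0:ℝ) < (n + 1 : ℝ) := by positivity
        have h3 := (halt n).le
        have hsm : T (u n) = ‖a n‖⁻¹ • T (a n) := by
          simp only [hudef]; exact T.map_smul_of_tower _ _
        rw [hsm, norm_smul, norm_inv, norm_norm, inv_mul_le_iff₀ h1, mul_one_div,
          le_div_iff₀ h2]
        nlinarith
      have hT0 : Tendsto (fun n => T (u n)) atTop (𝓝 0) := by
        rw [tendsto_zero_iff_norm_tendsto_zero]
        exact squeeze_zero (fun n => norm_nonneg _) hTu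
          tendsto_one_div_add_atTop_nhds_zero_nat
      obtain ⟨φ, hφ, w, hw⟩ := key u 1 (fun n => (hnorm n).le) 0 hT0
      have hw1 : ‖w‖ = 1 := by
        have hnw : Tendsto (fun n => ‖u (φ n)‖) atTop (𝓝 ‖w‖) := hw.norm
        have hnw' : Tendsto (fun n => ‖u (φ n)‖) atTop (𝓝 1) := by
          simp only [hnorm]
          exact tendsto_const_nhds
        exact (tendsto_nhds_unique hnw hnw').symm ▸ rfl
      have hwperp : w ∈ (LinearMap.ker (T : D →ₗ[ℂ] H₂))ᗮ :=
        (Submodule.isClosed_orthogonal _).mem_of_tendsto hw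
          (Eventually.of_forall fun n => humem (φ n))
      have hwker : w ∈ LinearMap.ker (T : D →ₗ[ℂ] H₂) := by
        rw [LinearMap.mem_ker]
        have ht1 : Tendsto (fun n => T (u (φ n))) atTop (𝓝 (T w)) :=
          (T.continuous.tendsto w).comp hw
        have ht2 : Tendsto (fun n => T (u (φ n))) atTop (𝓝 0) := hT0.comp hφ.tendsto_atTop
        exact tendsto_nhds_unique ht1 ht2
      have : w = 0 := by
        have := hwperp w hwker
        rwa [inner_self_eq_zero] at this
      rw [this, norm_zero] at hw1
      exact zero_ne_one hw1
    obtain ⟨c, hc⟩ := hc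
    apply IsSeqClosed.isClosed
    intro v p hv hvp
    have hv' : ∀ n, ∃ y : D, T y = v n := by
      intro n
      have := hv n
      rwa [SetLike.mem_coe, LinearMap.mem_range] at this
    choose g hg using hv'
    set u : ℕ → D := fun n => g n - (Submodule.orthogonalProjectionOnto (LinearMap.ker (T : D →ₗ[ℂ] H₂)) (g n) : D) with hudef
    have humem : ∀ n, u n ∈ (LinearMap.ker (T : D →ₗ[ℂ] H₂))ᗮ := fun n =>
      Submodule.sub_starProjection_mem_orthogonal (g n)
    have hTu : ∀ n, T (u n) = v n := by
      intro n
      have hker : ((Submodule.orthogonalProjectionOnto (LinearMap.ker (T : D →ₗ[ℂ] H₂)) (g n) : D)) ∈ LinearMap.ker (T : D →ₗ[ℂ] H₂) :=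
        SetLike.coe_mem _
      rw [LinearMap.mem_ker, ContinuousLinearMap.coe_coe] at hker
      simp only [hudef, map_sub, hker, sub_zero, hg]
    obtain ⟨M, hM⟩ := hvp.norm.bddAbove_range
    have hbnd : ∀ n, ‖u n‖ ≤ |c| * M := by
      intro n
      have h1 := hc (u n) (humem n)
      rw [hTu n] at h1
      have h2 : ‖v n‖ ≤ M := hM ⟨n, rfl⟩
      nlinarith [le_abs_self c, abs_nonneg c, norm_nonneg (v n), norm_nonneg (u n)]
    have hTv : Tendsto (fun n => T (u n)) atTop (𝓝 p) := by
      simp only [hTu]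
      exact hvp
    obtain ⟨φ, hφ, w, hw⟩ := key u (|c| * M) hbnd p hTv
    have ht1 : Tendsto (fun n => T (u (φ n))) atTop (𝓝 (T w)) := (T.continuous.tendsto w).comp hw
    have ht2 : Tendsto (fun n => T (u (φ n))) atTop (𝓝 p) := hTv.comp hφ.tendsto_atTop
    have : T w = p := tendsto_nhds_unique ht1 ht2
    rw [SetLike.mem_coe, LinearMap.mem_range]
    exact ⟨w, this⟩
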